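/- Let D be an m×m real matrix such that DD' is positive definite, let A be an m×k real matrix, B a vector in R^m, and let C = {z ∈ R^m : A'z has all nonnegative components}. Let z̄ be the minimizer over z ∈ C of ‖D'z − D⁻¹B‖. Then for every scalar α > 0, the vector α·z̄ minimizes the function z ↦ (1/2)z'DD'z − α·B'z over C, and the minimum value equals −(1/2)α²·z̄'DD'z̄. -/

import Mathlib

open Matrix

noncomputable def vnorm {m : ℕ} (v : Fin m → ℝ) : ℝ := Real.sqrt (v ⬝ᵥ v)

theorem stmt0 {m k : ℕ} (D : Matrix (Fin m) (Fin m) ℝ) (hD : (D * Dᵀ).PosDef)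
    (A : Matrix (Fin m) (Fin k) ℝ) (B : Fin m → ℝ)
    (C : Set (Fin m → ℝ)) (hC : C = {z | ∀ i, 0 ≤ (Aᵀ.mulVec z) i})
    (zbar : Fin m → ℝ) (hzbarC : zbar ∈ C)
    (hzbar : IsMinOn (fun z => vnorm (Dᵀ.mulVec z - D⁻¹.mulVec B)) C zbar)
    (α : ℝ) (hα : 0 < α) :
    α • zbar ∈ C ∧
    IsMinOn (fun z => (1/2) * (z ⬝ᵥ (D * Dᵀ).mulVec z) - α * (B ⬝ᵥ z)) C (α • zbar) ∧
    (1/2) * ((α • zbar) ⬝ᵥ (D * Dᵀ).mulVec (α • zbar)) - α * (B ⬝ᵥ (α • zbar))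
      = -(1/2) * α^2 * (zbar ⬝ᵥ (D * Dᵀ).mulVec zbar) := by
  -- D is invertible
  have hdet : D.det ≠ 0 := by
    have h1 : 0 < (D * Dᵀ).det := hD.det_pos
    rw [Matrix.det_mul, Matrix.det_transpose] at h1
    intro h; rw [h] at h1; simp at h1
  have hDinv : D * D⁻¹ = 1 := Matrix.mul_nonsing_inv D (isUnit_iff_ne_zero.mpr hdet)
  set c : Fin m → ℝ := D⁻¹.mulVec B with hc
  have hDc : D.mulVec c = B := by
    rw [hc, Matrix.mulVec_mulVec, hDinv, Matrix.one_mulVec]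
  -- quadratic form identities
  have hquad : ∀ z : Fin m → ℝ, z ⬝ᵥ (D * Dᵀ).mulVec z = Dᵀ.mulVec z ⬝ᵥ Dᵀ.mulVec z := by
    intro z
    rw [← Matrix.mulVec_mulVec, Matrix.dotProduct_mulVec, ← Matrix.mulVec_transpose]
  have hlin : ∀ z : Fin m → ℝ, Dᵀ.mulVec z ⬝ᵥ c = B ⬝ᵥ z := by
    intro z
    rw [Matrix.mulVec_transpose, ← Matrix.dotProduct_mulVec, hDc, dotProduct_comm]
  -- expansion of squared norm
  have hexp : ∀ z : Fin m → ℝ,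
      (Dᵀ.mulVec z - c) ⬝ᵥ (Dᵀ.mulVec z - c)
        = z ⬝ᵥ (D * Dᵀ).mulVec z - 2 * (B ⬝ᵥ z) + c ⬝ᵥ c := by
    intro z
    rw [sub_dotProduct, dotProduct_sub, dotProduct_sub,
      hquad z, hlin z, dotProduct_comm c (Dᵀ.mulVec z), hlin z]
    ring
  -- minimality for g z = (1/2) z'Qz - B'z
  set g : (Fin m → ℝ) → ℝ := fun z => (1/2) * (z ⬝ᵥ (D * Dᵀ).mulVec z) - B ⬝ᵥ z with hg
  have hsqnn : ∀ v : Fin m → ℝ, 0 ≤ v ⬝ᵥ v := fun v =>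
    Finset.sum_nonneg fun i _ => mul_self_nonneg (v i)
  have hgmin : ∀ z ∈ C, g zbar ≤ g z := by
    intro z hz
    have h1 := hzbar hz
    simp only [vnorm, Set.mem_setOf_eq] at h1
    have h2 : (Dᵀ.mulVec zbar - c) ⬝ᵥ (Dᵀ.mulVec zbar - c)
        ≤ (Dᵀ.mulVec z - c) ⬝ᵥ (Dᵀ.mulVec z - c) := by
      calc (Dᵀ.mulVec zbar - c) ⬝ᵥ (Dᵀ.mulVec zbar - c)
          = Real.sqrt ((Dᵀ.mulVec zbar - c) ⬝ᵥ (Dᵀ.mulVec zbar - c)) ^ 2 := by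
            rw [Real.sq_sqrt (hsqnn _)]
        _ ≤ Real.sqrt ((Dᵀ.mulVec z - c) ⬝ᵥ (Dᵀ.mulVec z - c)) ^ 2 := by
            apply pow_le_pow_left₀ (Real.sqrt_nonneg _) h1
        _ = (Dᵀ.mulVec z - c) ⬝ᵥ (Dᵀ.mulVec z - c) := Real.sq_sqrt (hsqnn _)
    rw [hexp, hexp] at h2
    simp only [hg]; linarith
  -- C is a cone
  have hcone : ∀ t : ℝ, 0 ≤ t → ∀ z ∈ C, t • z ∈ C := by
    intro t ht z hz
    rw [hC] at hz ⊢
    intro i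
    rw [Matrix.mulVec_smul]
    exact mul_nonneg ht (hz i)
  -- quadratic scaling
  have hscale : ∀ (t : ℝ) (z : Fin m → ℝ),
      (t • z) ⬝ᵥ (D * Dᵀ).mulVec (t • z) = t^2 * (z ⬝ᵥ (D * Dᵀ).mulVec z) := by
    intro t z
    rw [Matrix.mulVec_smul, smul_dotProduct, dotProduct_smul]
    simp [smul_eq_mul]; ring
  set q : ℝ := zbar ⬝ᵥ (D * Dᵀ).mulVec zbar with hq
  set b : ℝ := B ⬝ᵥ zbar with hb
  have hgt : ∀ t : ℝ, 0 ≤ t → g zbar ≤ g (t • zbar) := fun t ht =>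
    hgmin _ (hcone t ht zbar hzbarC)
  have hgtval : ∀ t : ℝ, g (t • zbar) = (1/2) * t^2 * q - t * b := by
    intro t
    simp only [hg, hscale, dotProduct_smul, smul_eq_mul, hq, hb]
    ring
  have hgzbar : g zbar = (1/2) * q - b := by
    have := hgtval 1; simpa using this
  -- key: b = q
  have hqnn : 0 ≤ q := by have h := hD.posSemidef.dotProduct_mulVec_nonneg zbar; rw [star_trivial] at h; exact h
  have hbq : b = q := by
    by_cases hz0 : zbar = 0
    · simp [hb, hq, hz0, Matrix.mulVec_zero]
    · have hqpos : 0 < q := by have h := hD.dotProduct_mulVec_pos hz0; rw [star_trivial] at h; exact h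
      -- from t = 0 : b ≥ q/2 ≥ 0 (not even needed beyond b/q ≥ 0)
      have h0 := hgt 0 le_rfl
      rw [hgtval, hgzbar] at h0
      have hbnn : 0 ≤ b := by nlinarith
      have ht := hgt (b / q) (div_nonneg hbnn hqnn)
      rw [hgtval, hgzbar] at ht
      have hrhs : (1/2) * (b/q)^2 * q - (b/q) * b = -(b^2) / (2*q) := by
        field_simp; ring
      rw [hrhs] at ht
      rw [le_div_iff₀ (by positivity : (0:ℝ) < 2*q)] at ht
      have hsq : (q - b)^2 ≤ 0 := by nlinarith
      have h4 : q - b = 0 := by nlinarith [sq_nonneg (q - b)]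
      linarith
  refine ⟨hcone α hα.le zbar hzbarC, ?_, ?_⟩
  · rw [isMinOn_iff]
    intro z hz
    have hw : α⁻¹ • z ∈ C := hcone α⁻¹ (inv_nonneg.mpr hα.le) z hz
    have h1 := hgmin _ hw
    have e1 : g (α⁻¹ • z) = α⁻¹^2 * ((1/2) * (z ⬝ᵥ (D * Dᵀ).mulVec z)) - α⁻¹ * (B ⬝ᵥ z) := by
      simp only [hg, hscale, dotProduct_smul, smul_eq_mul]
      ring
    have e2 : (1/2) * ((α • zbar) ⬝ᵥ (D * Dᵀ).mulVec (α • zbar)) - α * (B ⬝ᵥ (α • zbar))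
        = α^2 * g zbar := by
      simp only [hg, hscale, dotProduct_smul, smul_eq_mul, hq, hb]
      ring
    rw [e2]
    have hα2 : (0:ℝ) < α^2 := pow_pos hα 2
    have := mul_le_mul_of_nonneg_left h1 hα2.le
    rw [e1] at this
    have hαne : α ≠ 0 := hα.ne'
    calc α^2 * g zbar ≤ α^2 * (α⁻¹^2 * ((1/2) * (z ⬝ᵥ (D * Dᵀ).mulVec z)) - α⁻¹ * (B ⬝ᵥ z)) := this
      _ = (1/2) * (z ⬝ᵥ (D * Dᵀ).mulVec z) - α * (B ⬝ᵥ z) := by field_simp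
  · rw [hscale, dotProduct_smul, smul_eq_mul, ← hq, ← hb, hbq]
    ring
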